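/- If the 3-stretch G of a graph H (with m' edges) has an independent set of size m' + k', then H has an independent set of size at least k'. -/

import Mathlib

open scoped Classical

noncomputable section

/-- The 3-stretch of a simple graph `H`: every edge `e = {u,v}` of `H`
(with endpoints labelled `(p e).1 = u` and `(p e).2 = v`) is replaced by the
path `u — (e,0) — (e,1) — v` with two fresh internal vertices. -/
def ThreeStretch {V : Type*} (H : SimpleGraph V) (p : H.edgeSet → V × V) :
    SimpleGraph (V ⊕ (H.edgeSet × Fin 2)) :=
  SimpleGraph.fromRel (fun x y =>
    match x, y with
    | Sum.inl u, Sum.inr (e, i) => (i = 0 ∧ u = (p e).1) ∨ (i = 1 ∧ u = (p e).2)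
    | Sum.inr (e, i), Sum.inr (f, j) => e = f ∧ i ≠ j
    | _, _ => False)

/-- `S` is an independent set of `G`: no two of its vertices are adjacent. -/
def IsIndep {V : Type*} (G : SimpleGraph V) (S : Finset V) : Prop :=
  ∀ u ∈ S, ∀ v ∈ S, ¬ G.Adj u v

/-- If the 3-stretch of `H` has an independent set of size `m' + k'`, where `m'`
is the number of edges of `H`, then `H` has an independent set of size at least `k'`. -/
theorem indep_of_threeStretch_indep {V : Type*} [Fintype V] [DecidableEq V]
    (H : SimpleGraph V) [DecidableRel H.Adj]
    (p : H.edgeSet → V × V) (hp : ∀ e : H.edgeSet, s((p e).1, (p e).2) = (e : Sym2 V))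
    (m' k' : ℕ) (hm : H.edgeFinset.card = m')
    (h : ∃ S : Finset (V ⊕ (H.edgeSet × Fin 2)),
      IsIndep (ThreeStretch H p) S ∧ S.card = m' + k') :
    ∃ S : Finset V, IsIndep H S ∧ k' ≤ S.card := by
  classical
  obtain ⟨S, hS, hcard⟩ := h
  set SL := S.filter (fun x => x.isLeft) with hSLdef
  set SR := S.filter (fun x => ¬ x.isLeft) with hSRdef
  have hsplit : SL.card + SR.card = m' + k' := by
    rw [hSLdef, hSRdef, Finset.card_filter_add_card_filter_not, hcard]
  set Bad : Finset H.edgeSet := Finset.univ.filter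
    (fun e => Sum.inl (p e).1 ∈ S ∧ Sum.inl (p e).2 ∈ S) with hBaddef
  have hmuniv : (Finset.univ : Finset H.edgeSet).card = m' := by
    rw [← hm, Finset.card_univ, SimpleGraph.edgeFinset]
    exact (Set.toFinset_card _).symm
  -- adjacency facts
  have adj1 : ∀ e : H.edgeSet,
      (ThreeStretch H p).Adj (Sum.inl (p e).1) (Sum.inr (e, 0)) := by
    intro e
    simp [ThreeStretch, SimpleGraph.fromRel_adj]
  have adj2 : ∀ e : H.edgeSet,
      (ThreeStretch H p).Adj (Sum.inl (p e).2) (Sum.inr (e, 1)) := by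
    intro e
    simp [ThreeStretch, SimpleGraph.fromRel_adj]
  have adjmid : ∀ (e : H.edgeSet) (i j : Fin 2), i ≠ j →
      (ThreeStretch H p).Adj (Sum.inr (e, i)) (Sum.inr (e, j)) := by
    intro e i j hij
    simp [ThreeStretch, SimpleGraph.fromRel_adj, hij, Ne.symm hij]
  -- bad edges have no interior vertices in S
  have hBadS : ∀ e ∈ Bad, ∀ i : Fin 2, Sum.inr (e, i) ∉ S := by
    intro e he i hmem
    rw [hBaddef, Finset.mem_filter] at he
    fin_cases i
    · exact hS _ he.2.1 _ hmem (adj1 e)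
    · exact hS _ he.2.2 _ hmem (adj2 e)
  -- bound on SR
  have h2 : SR.card + Bad.card ≤ m' := by
    have hsub : Bad ⊆ Finset.univ := Finset.subset_univ _
    have key : SR.card ≤ (Finset.univ \ Bad).card := by
      have himg : ((Finset.univ \ Bad).image
          (fun e => (some e : Option H.edgeSet))).card = (Finset.univ \ Bad).card :=
        Finset.card_image_of_injective _ (Option.some_injective _)
      rw [← himg]
      apply Finset.card_le_card_of_injOn
        (Sum.elim (fun _ => (none : Option H.edgeSet)) (fun ei => some ei.1))
      · intro x hx
        simp only [Finset.mem_coe, hSRdef, Finset.mem_filter] at hx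
        obtain v | ⟨e, i⟩ := x
        · simp at hx
        · simp only [Sum.elim_inr, Finset.mem_coe, Finset.mem_image]
          refine ⟨e, ?_, rfl⟩
          rw [Finset.mem_sdiff]
          refine ⟨Finset.mem_univ _, fun hbad => ?_⟩
          exact hBadS e hbad i hx.1
      · intro x hx y hy hxy
        simp only [Finset.mem_coe, hSRdef, Finset.mem_filter] at hx hy
        obtain v | ⟨e, i⟩ := x
        · simp at hx
        obtain w | ⟨f, j⟩ := y
        · simp at hy
        simp only [Sum.elim_inr, Option.some.injEq] at hxy
        subst hxy
        by_cases hij : i = j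
        · rw [hij]
        · exact absurd (adjmid e i j hij) (hS _ hx.1 _ hy.1 ·)
    have := Finset.card_sdiff_add_card_eq_card hsub
    omega
  set A : Finset V := Finset.univ.filter (fun v => Sum.inl v ∈ S) with hAdef
  have h3 : A.card = SL.card := by
    apply Finset.card_bij (fun v _ => Sum.inl v)
    · intro v hv
      rw [hAdef, Finset.mem_filter] at hv
      rw [hSLdef, Finset.mem_filter]
      exact ⟨hv.2, rfl⟩
    · intro a ha b hb hab
      exact Sum.inl.inj hab
    · intro x hx
      rw [hSLdef, Finset.mem_filter] at hx
      obtain v | ⟨e, i⟩ := x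
      · exact ⟨v, by rw [hAdef, Finset.mem_filter]; exact ⟨Finset.mem_univ _, hx.1⟩, rfl⟩
      · simp at hx
  set T : Finset V := Bad.image (fun e => (p e).1) with hTdef
  set A' : Finset V := A \ T with hA'def
  refine ⟨A', ?_, ?_⟩
  · -- independence of A'
    intro u hu v hv hadj
    rw [hA'def, Finset.mem_sdiff, hAdef, Finset.mem_filter] at hu hv
    have he : s(u, v) ∈ H.edgeSet := hadj
    set e : H.edgeSet := ⟨s(u, v), he⟩ with hedef
    have hpe : s((p e).1, (p e).2) = s(u, v) := hp e
    rw [Sym2.eq_iff] at hpe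
    have hbad : e ∈ Bad := by
      rw [hBaddef, Finset.mem_filter]
      rcases hpe with ⟨h1, h2⟩ | ⟨h1, h2⟩
      · exact ⟨Finset.mem_univ _, by rw [h1]; exact hu.1.2, by rw [h2]; exact hv.1.2⟩
      · exact ⟨Finset.mem_univ _, by rw [h1]; exact hv.1.2, by rw [h2]; exact hu.1.2⟩
    rcases hpe with ⟨h1, _⟩ | ⟨h1, _⟩
    · exact hu.2 (by rw [hTdef]; exact Finset.mem_image.2 ⟨e, hbad, h1⟩)
    · exact hv.2 (by rw [hTdef]; exact Finset.mem_image.2 ⟨e, hbad, h1⟩)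
  · -- cardinality
    have h4 : A.card ≤ A'.card + Bad.card := by
      have h5 : A.card ≤ A'.card + T.card := by
        rw [hA'def]; exact Finset.card_le_card_sdiff_add_card
      have h6 : T.card ≤ Bad.card := Finset.card_image_le
      omega
    omega
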